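/- Let p, q : ℝⁿ → ℝ be measurable variable exponents with 1 < q⁻ ≤ q⁺ < ∞, 1 < p⁻ ≤ p⁺ < ∞ and q(x) ≤ p(x) for a.e. x, and let ϑ be a weight with ϑ^{-1/(p(·)-1)} locally integrable. If A ⊆ ℝⁿ satisfies C_{p,ϑ}(A) = 0, then C_{q,ϑ}(A) = 0. -/

import Mathlib

open MeasureTheory Metric Set Filter ENNReal

noncomputable section

/-- The weighted variable exponent modular `ρ_{p,ϑ,A}(g) = ∫_A |g|^{p(x)} ϑ(x) dx`. -/
def rhoMod {n : ℕ} (p ϑ : EuclideanSpace ℝ (Fin n) → ℝ)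
    (A : Set (EuclideanSpace ℝ (Fin n))) (g : EuclideanSpace ℝ (Fin n) → ℝ) : ℝ≥0∞ :=
  ∫⁻ x in A, ENNReal.ofReal (|g x| ^ p x * ϑ x)

/-- Relative `(p(·),ϑ)`-capacity of a compact set `K` with respect to an open set `Ω`:
the infimum of `ρ_{p,ϑ,Ω}(‖Df‖)` over `C¹` functions with compact support contained in `Ω`
which are `≥ 1` on `K` (with `sInf ∅ = ∞`). -/
def relCapK {n : ℕ} (p ϑ : EuclideanSpace ℝ (Fin n) → ℝ)
    (K Ω : Set (EuclideanSpace ℝ (Fin n))) : ℝ≥0∞ :=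
  sInf ((fun f => rhoMod p ϑ Ω fun x => ‖fderiv ℝ f x‖) ''
    {f : EuclideanSpace ℝ (Fin n) → ℝ |
      ContDiff ℝ 1 f ∧ IsCompact (tsupport f) ∧ tsupport f ⊆ Ω ∧ ∀ x ∈ K, 1 ≤ f x})

/-- Relative capacity of an open subset `U ⊆ Ω`. -/
def relCapO {n : ℕ} (p ϑ : EuclideanSpace ℝ (Fin n) → ℝ)
    (U Ω : Set (EuclideanSpace ℝ (Fin n))) : ℝ≥0∞ :=
  ⨆ (K : Set (EuclideanSpace ℝ (Fin n))) (_ : IsCompact K ∧ K ⊆ U), relCapK p ϑ K Ω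

/-- Relative capacity of an arbitrary subset `A ⊆ Ω`. -/
def relCap {n : ℕ} (p ϑ : EuclideanSpace ℝ (Fin n) → ℝ)
    (A Ω : Set (EuclideanSpace ℝ (Fin n))) : ℝ≥0∞ :=
  ⨅ (U : Set (EuclideanSpace ℝ (Fin n))) (_ : IsOpen U ∧ A ⊆ U ∧ U ⊆ Ω), relCapO p ϑ U Ω

/-- The Sobolev `(p(·),ϑ)`-capacity of `A ⊆ ℝⁿ`. -/
def sobCap {n : ℕ} (p ϑ : EuclideanSpace ℝ (Fin n) → ℝ)
    (A : Set (EuclideanSpace ℝ (Fin n))) : ℝ≥0∞ :=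
  sInf ((fun f => ∫⁻ x, ENNReal.ofReal ((|f x| ^ p x + ‖fderiv ℝ f x‖ ^ p x) * ϑ x)) ''
    {f : EuclideanSpace ℝ (Fin n) → ℝ |
      ContDiff ℝ 1 f ∧ ∃ U, IsOpen U ∧ A ⊆ U ∧ ∀ x ∈ U, 1 ≤ f x})

/-- The weighted measure `μ_ϑ(A) = ∫_A ϑ(x) dx`. -/
def muW {n : ℕ} (ϑ : EuclideanSpace ℝ (Fin n) → ℝ)
    (A : Set (EuclideanSpace ℝ (Fin n))) : ℝ≥0∞ :=
  ∫⁻ x in A, ENNReal.ofReal (ϑ x)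

/-- `μ_ϑ` is doubling with constant `cd`. -/
def DoublingW {n : ℕ} (ϑ : EuclideanSpace ℝ (Fin n) → ℝ) (cd : ℝ) : Prop :=
  1 ≤ cd ∧ ∀ (x : EuclideanSpace ℝ (Fin n)) (r : ℝ), 0 < r →
    muW ϑ (ball x (2 * r)) ≤ ENNReal.ofReal cd * muW ϑ (ball x r)

/-- Poincaré hypothesis with constant `c` for the weight `ϑ`. -/
def PoincareHyp {n : ℕ} (ϑ : EuclideanSpace ℝ (Fin n) → ℝ) (c : ℝ) : Prop :=
  ∀ Ω : Set (EuclideanSpace ℝ (Fin n)), IsOpen Ω → Bornology.IsBounded Ω →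
    ∀ f : EuclideanSpace ℝ (Fin n) → ℝ, ContDiff ℝ 1 f → IsCompact (tsupport f) →
      tsupport f ⊆ Ω →
      ∫ x in Ω, |f x| * ϑ x ≤ c * diam Ω * ∫ x in Ω, ‖fderiv ℝ f x‖ * ϑ x

/-- Embedding hypothesis `L^{p(·)}_ϑ(Ω) ↪ L¹_ϑ(Ω)` with constants `c₁ Ω`. -/
def EmbeddingHyp {n : ℕ} (p ϑ : EuclideanSpace ℝ (Fin n) → ℝ)
    (c₁ : Set (EuclideanSpace ℝ (Fin n)) → ℝ) : Prop :=
  ∀ Ω : Set (EuclideanSpace ℝ (Fin n)), IsOpen Ω → Bornology.IsBounded Ω →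
    0 < c₁ Ω ∧ ∀ g : EuclideanSpace ℝ (Fin n) → ℝ, Measurable g → 1 ≤ rhoMod p ϑ Ω g →
      (∫⁻ x in Ω, ENNReal.ofReal (|g x| * ϑ x)) ≤ ENNReal.ofReal (c₁ Ω) * rhoMod p ϑ Ω g

/-- The Wiener sum `W^{sum}_{p,ϑ}(A,x₀)`. -/
def wienerSum {n : ℕ} (p ϑ : EuclideanSpace ℝ (Fin n) → ℝ)
    (A : Set (EuclideanSpace ℝ (Fin n))) (x₀ : EuclideanSpace ℝ (Fin n)) : ℝ≥0∞ :=
  ∑' i : ℕ,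
    (relCap p ϑ (A ∩ ball x₀ ((2 : ℝ) ^ (-(i : ℤ)))) (ball x₀ ((2 : ℝ) ^ (1 - (i : ℤ)))) /
        relCap p ϑ (ball x₀ ((2 : ℝ) ^ (-(i : ℤ)))) (ball x₀ ((2 : ℝ) ^ (1 - (i : ℤ))))) ^
      (1 / (p x₀ - 1))

/-- The Wiener type integral `W_{p,ϑ}(A,x₀)`. -/
def wienerInt {n : ℕ} (p ϑ : EuclideanSpace ℝ (Fin n) → ℝ)
    (A : Set (EuclideanSpace ℝ (Fin n))) (x₀ : EuclideanSpace ℝ (Fin n)) : ℝ≥0∞ :=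
  ∫⁻ r in Set.Ioo (0 : ℝ) 1,
    (relCap p ϑ (A ∩ ball x₀ r) (ball x₀ (2 * r)) /
        relCap p ϑ (ball x₀ r) (ball x₀ (2 * r))) ^ (1 / (p x₀ - 1)) / ENNReal.ofReal r


/-- Auxiliary C¹ truncation function: `0` for `s ≤ 1/2`, `1` for `s ≥ 1`. -/
def phiFn : ℝ → ℝ := fun s => Real.smoothTransition (2 * s - 1)

lemma phiFn_contDiff : ContDiff ℝ 1 phiFn :=
  Real.smoothTransition.contDiff.comp ((contDiff_const.mul contDiff_id).sub contDiff_const)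

lemma phiFn_nonneg (s : ℝ) : 0 ≤ phiFn s := Real.smoothTransition.nonneg _

lemma phiFn_le_one (s : ℝ) : phiFn s ≤ 1 := Real.smoothTransition.le_one _

lemma phiFn_zero {s : ℝ} (hs : s ≤ 1 / 2) : phiFn s = 0 :=
  Real.smoothTransition.zero_of_nonpos (by linarith)

lemma phiFn_one {s : ℝ} (hs : 1 ≤ s) : phiFn s = 1 :=
  Real.smoothTransition.one_of_one_le (by linarith)

lemma phiFn_fderiv_zero_lt {t : ℝ} (ht : t < 1 / 2) : fderiv ℝ phiFn t = 0 := by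
  have hev : phiFn =ᶠ[nhds t] fun _ => (0 : ℝ) := by
    filter_upwards [Iio_mem_nhds ht] with y hy
    exact phiFn_zero hy.le
  rw [hev.fderiv_eq, fderiv_const_apply]

lemma phiFn_fderiv_zero_gt {t : ℝ} (ht : 1 < t) : fderiv ℝ phiFn t = 0 := by
  have hev : phiFn =ᶠ[nhds t] fun _ => (1 : ℝ) := by
    filter_upwards [Ioi_mem_nhds ht] with y hy
    exact phiFn_one hy.le
  rw [hev.fderiv_eq, fderiv_const_apply]

lemma phiFn_fderiv_bound : ∃ L : ℝ, 1 ≤ L ∧ ∀ t, ‖fderiv ℝ phiFn t‖ ≤ L := by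
  have hc : Continuous fun t => fderiv ℝ phiFn t := phiFn_contDiff.continuous_fderiv one_ne_zero
  obtain ⟨M, hM⟩ := (isCompact_Icc (a := (0 : ℝ)) (b := 2)).exists_bound_of_continuousOn
    hc.continuousOn
  refine ⟨max M 1, le_max_right _ _, fun t => ?_⟩
  by_cases ht : t ∈ Icc (0 : ℝ) 2
  · exact (hM t ht).trans (le_max_left _ _)
  · rcases not_and_or.mp ht with ht' | ht'
    · rw [phiFn_fderiv_zero_lt (by push_neg at ht'; linarith)]
      simpa using (le_max_right M 1).trans' zero_le_one
    · rw [phiFn_fderiv_zero_gt (by push_neg at ht'; linarith)]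
      simpa using (le_max_right M 1).trans' zero_le_one

/-- The core pointwise inequality. -/
lemma core_ineq {qx px P L a b F G : ℝ} (hq : 1 < qx) (hqp : qx ≤ px) (hP : px ≤ P)
    (hL : 1 ≤ L) (ha0 : 0 ≤ a) (ha1 : a ≤ 1) (hb0 : 0 ≤ b) (hbLG : b ≤ L * G)
    (hG0 : 0 ≤ G) (hF : 1 ≤ 2 * F) (hF0 : 0 ≤ F) :
    a ^ qx + b ^ qx ≤ (2 * (2 : ℝ) ^ P + L ^ P) * (F ^ px + G ^ px) := by
  have hq0 : 0 ≤ qx := by linarith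
  have hp0 : 0 ≤ px := by linarith
  have hFp : 0 ≤ F ^ px := Real.rpow_nonneg hF0 px
  have hGp : 0 ≤ G ^ px := Real.rpow_nonneg hG0 px
  have h1 : (1 : ℝ) ≤ (2 * F) ^ px := by
    calc (1 : ℝ) = 1 ^ px := (Real.one_rpow px).symm
    _ ≤ (2 * F) ^ px := Real.rpow_le_rpow zero_le_one hF hp0
  have h2 : (2 * F) ^ px = 2 ^ px * F ^ px := Real.mul_rpow (by norm_num) hF0
  have h3 : (2 : ℝ) ^ px ≤ 2 ^ P := Real.rpow_le_rpow_of_exponent_le one_le_two hP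
  have key1 : (1 : ℝ) ≤ 2 ^ P * F ^ px := by nlinarith
  have haq : a ^ qx ≤ 1 := Real.rpow_le_one ha0 ha1 hq0
  have hLP : (1 : ℝ) ≤ L ^ P := by
    calc (1 : ℝ) = L ^ (0 : ℝ) := (Real.rpow_zero L).symm
    _ ≤ L ^ P := Real.rpow_le_rpow_of_exponent_le hL (by linarith)
  have h2P : (1 : ℝ) ≤ (2 : ℝ) ^ P := by
    calc (1 : ℝ) = (2 : ℝ) ^ (0 : ℝ) := (Real.rpow_zero 2).symm
    _ ≤ (2 : ℝ) ^ P := Real.rpow_le_rpow_of_exponent_le one_le_two (by linarith)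
  have hbq : b ^ qx ≤ 1 + L ^ P * G ^ px := by
    rcases le_or_gt b 1 with hb1 | hb1
    · have h4 := Real.rpow_le_one hb0 hb1 hq0
      nlinarith
    · have h4 : b ^ qx ≤ b ^ px := Real.rpow_le_rpow_of_exponent_le hb1.le hqp
      have h5 : b ^ px ≤ (L * G) ^ px := Real.rpow_le_rpow hb0 hbLG hp0
      have h6 : (L * G) ^ px = L ^ px * G ^ px := Real.mul_rpow (by linarith) hG0
      have h7 : L ^ px ≤ L ^ P := Real.rpow_le_rpow_of_exponent_le hL hP
      nlinarith
  nlinarith [mul_nonneg (by linarith : (0:ℝ) ≤ (2:ℝ) ^ P) hGp,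
    mul_nonneg (by linarith : (0:ℝ) ≤ L ^ P) hFp]

/-- If the Sobolev `(p(·),ϑ)`-capacity of `A` is zero and `q ≤ p` a.e., then the
Sobolev `(q(·),ϑ)`-capacity of `A` is zero. -/
theorem stmt0 (n : ℕ) (hn : 1 ≤ n) (p ϑ : EuclideanSpace ℝ (Fin n) → ℝ)
    (hp : Measurable p)
    (hpm : 1 < essInf p (volume : Measure (EuclideanSpace ℝ (Fin n))))
    (hpb : Filter.IsBoundedUnder (· ≤ ·) (ae (volume : Measure (EuclideanSpace ℝ (Fin n)))) p)
    (hϑpos : ∀ x, 0 < ϑ x)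
    (hϑloc : LocallyIntegrable ϑ (volume : Measure (EuclideanSpace ℝ (Fin n))))
    (q : EuclideanSpace ℝ (Fin n) → ℝ) (hq : Measurable q)
    (hqm : 1 < essInf q (volume : Measure (EuclideanSpace ℝ (Fin n))))
    (hqb : Filter.IsBoundedUnder (· ≤ ·) (ae (volume : Measure (EuclideanSpace ℝ (Fin n)))) q)
    (hqp : ∀ᵐ x ∂(volume : Measure (EuclideanSpace ℝ (Fin n))), q x ≤ p x)
    (hϑinv : LocallyIntegrable (fun x => ϑ x ^ (-(1 / (p x - 1)))) (volume : Measure (EuclideanSpace ℝ (Fin n))))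
    (A : Set (EuclideanSpace ℝ (Fin n))) (h : sobCap p ϑ A = 0) :
    sobCap q ϑ A = 0 := by
  classical
  -- the ambient volume is nonzero, so `ae` is nontrivial
  have hvol : (volume : Measure (EuclideanSpace ℝ (Fin n))) ≠ 0 := by
    intro h0
    have hb := measure_ball_pos (volume : Measure (EuclideanSpace ℝ (Fin n)))
      (0 : EuclideanSpace ℝ (Fin n)) one_pos
    rw [h0] at hb
    simp at hb
  haveI : (ae (volume : Measure (EuclideanSpace ℝ (Fin n)))).NeBot := ae_neBot.mpr hvol
  -- a.e. bounds on the exponents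
  have hbdd : (ae (volume : Measure (EuclideanSpace ℝ (Fin n)))).IsBoundedUnder (· ≥ ·) q := by
    by_contra hno
    have hempty : {a : ℝ | ∀ᶠ x in ae (volume : Measure (EuclideanSpace ℝ (Fin n))), a ≤ q x}
        = ∅ := by
      rw [Set.eq_empty_iff_forall_notMem]
      intro a ha
      exact hno ⟨a, Filter.eventually_map.mpr ha⟩
    have heq : essInf q (volume : Measure (EuclideanSpace ℝ (Fin n)))
        = sSup {a : ℝ | ∀ᶠ x in ae (volume : Measure (EuclideanSpace ℝ (Fin n))), a ≤ q x} :=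
      Filter.liminf_eq
    rw [hempty, Real.sSup_empty] at heq
    rw [heq] at hqm
    norm_num at hqm
  have hq1 : ∀ᵐ x ∂(volume : Measure (EuclideanSpace ℝ (Fin n))), 1 < q x :=
    Filter.eventually_lt_of_lt_liminf hqm hbdd
  obtain ⟨P₀, hP₀⟩ := hpb
  have hpP₀ : ∀ᵐ x ∂(volume : Measure (EuclideanSpace ℝ (Fin n))), p x ≤ P₀ :=
    Filter.eventually_map.mp hP₀
  set P : ℝ := max P₀ 1 with hPdef
  have hP1 : (1 : ℝ) ≤ P := le_max_right _ _
  have hpP : ∀ᵐ x ∂(volume : Measure (EuclideanSpace ℝ (Fin n))), p x ≤ P := by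
    filter_upwards [hpP₀] with x hx
    exact hx.trans (le_max_left _ _)
  obtain ⟨L, hL1, hLb⟩ := phiFn_fderiv_bound
  set C : ℝ := 2 * (2 : ℝ) ^ P + L ^ P with hCdef
  have hCpos : 0 < C := by
    have h2P : (0 : ℝ) < (2 : ℝ) ^ P := Real.rpow_pos_of_pos two_pos P
    have hLP : (0 : ℝ) < L ^ P := Real.rpow_pos_of_pos (by linarith) P
    positivity
  have hC0 : ENNReal.ofReal C ≠ 0 := by
    simp [ENNReal.ofReal_eq_zero, not_le, hCpos]
  have hCt : ENNReal.ofReal C ≠ ∞ := ENNReal.ofReal_ne_top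
  refine nonpos_iff_eq_zero.mp (ENNReal.le_of_forall_pos_le_add fun ε hε _ => ?_)
  have hε' : (ε : ℝ≥0∞) ≠ 0 := by
    simpa using hε.ne'
  set δ : ℝ≥0∞ := (ε : ℝ≥0∞) / ENNReal.ofReal C with hδdef
  have hδpos : 0 < δ := ENNReal.div_pos hε' hCt
  have hlt : sobCap p ϑ A < δ := by rw [h]; exact hδpos
  simp only [sobCap] at hlt ⊢
  obtain ⟨v, hv, hvlt⟩ := sInf_lt_iff.mp hlt
  obtain ⟨f, hfmem, rfl⟩ := hv
  obtain ⟨hf, U, hU, hAU, hfU⟩ := hfmem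
  -- the truncated test function
  set g : EuclideanSpace ℝ (Fin n) → ℝ := fun x => phiFn (f x) with hgdef
  have hgC : ContDiff ℝ 1 g := phiFn_contDiff.comp hf
  have hgU : ∀ x ∈ U, 1 ≤ g x := fun x hx => le_of_eq (phiFn_one (hfU x hx)).symm
  have hmem : (∫⁻ x, ENNReal.ofReal ((|g x| ^ q x + ‖fderiv ℝ g x‖ ^ q x) * ϑ x)) ∈
      ((fun f => ∫⁻ x, ENNReal.ofReal ((|f x| ^ q x + ‖fderiv ℝ f x‖ ^ q x) * ϑ x)) ''
        {f : EuclideanSpace ℝ (Fin n) → ℝ |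
          ContDiff ℝ 1 f ∧ ∃ U, IsOpen U ∧ A ⊆ U ∧ ∀ x ∈ U, 1 ≤ f x}) :=
    ⟨g, ⟨hgC, U, hU, hAU, hgU⟩, rfl⟩
  -- pointwise a.e. bound of the q-integrand by the p-integrand
  have hae : ∀ᵐ x ∂(volume : Measure (EuclideanSpace ℝ (Fin n))),
      ENNReal.ofReal ((|g x| ^ q x + ‖fderiv ℝ g x‖ ^ q x) * ϑ x) ≤
        ENNReal.ofReal C *
          ENNReal.ofReal ((|f x| ^ p x + ‖fderiv ℝ f x‖ ^ p x) * ϑ x) := by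
    filter_upwards [hq1, hpP, hqp] with x hq1x hpPx hqpx
    rw [← ENNReal.ofReal_mul hCpos.le]
    rcases lt_or_ge (f x) (1 / 2) with hxS | hxS
    · -- here `g` vanishes in a neighborhood of `x`
      have hopen : IsOpen {y : EuclideanSpace ℝ (Fin n) | f y < 1 / 2} :=
        isOpen_lt hf.continuous continuous_const
      have hev : g =ᶠ[nhds x] fun _ => (0 : ℝ) := by
        filter_upwards [hopen.mem_nhds hxS] with y hy
        exact phiFn_zero hy.le
      have hgx : g x = 0 := phiFn_zero hxS.le
      have hDgx : fderiv ℝ g x = 0 := by rw [hev.fderiv_eq, fderiv_const_apply]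
      have hqne : q x ≠ 0 := by linarith
      rw [hgx, hDgx]
      simp only [abs_zero, norm_zero, Real.zero_rpow hqne, add_zero, zero_mul,
        ENNReal.ofReal_zero]
      exact zero_le
    · -- here `|f x| ≥ 1/2` and we use the core inequality
      have hφd : DifferentiableAt ℝ phiFn (f x) :=
        (phiFn_contDiff.differentiable one_ne_zero).differentiableAt
      have hfd : DifferentiableAt ℝ f x := (hf.differentiable one_ne_zero).differentiableAt
      have hcomp : fderiv ℝ g x = (fderiv ℝ phiFn (f x)).comp (fderiv ℝ f x) :=
        fderiv_comp x hφd hfd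
      have hDg : ‖fderiv ℝ g x‖ ≤ L * ‖fderiv ℝ f x‖ := by
        rw [hcomp]
        exact (ContinuousLinearMap.opNorm_comp_le _ _).trans
          (mul_le_mul_of_nonneg_right (hLb (f x)) (norm_nonneg _))
      have hcore : |g x| ^ q x + ‖fderiv ℝ g x‖ ^ q x ≤
          C * (|f x| ^ p x + ‖fderiv ℝ f x‖ ^ p x) := by
        refine core_ineq hq1x hqpx hpPx hL1 (abs_nonneg _) ?_ (norm_nonneg _) hDg
          (norm_nonneg _) ?_ (abs_nonneg _)
        · rw [abs_of_nonneg (phiFn_nonneg _)]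
          exact phiFn_le_one _
        · have := le_abs_self (f x)
          linarith
      apply ENNReal.ofReal_le_ofReal
      calc (|g x| ^ q x + ‖fderiv ℝ g x‖ ^ q x) * ϑ x
          ≤ C * (|f x| ^ p x + ‖fderiv ℝ f x‖ ^ p x) * ϑ x :=
            mul_le_mul_of_nonneg_right hcore (hϑpos x).le
        _ = C * ((|f x| ^ p x + ‖fderiv ℝ f x‖ ^ p x) * ϑ x) := by ring
  have hbound : (∫⁻ x, ENNReal.ofReal ((|g x| ^ q x + ‖fderiv ℝ g x‖ ^ q x) * ϑ x)) ≤
      (ε : ℝ≥0∞) := by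
    calc (∫⁻ x, ENNReal.ofReal ((|g x| ^ q x + ‖fderiv ℝ g x‖ ^ q x) * ϑ x))
        ≤ ∫⁻ x, ENNReal.ofReal C *
            ENNReal.ofReal ((|f x| ^ p x + ‖fderiv ℝ f x‖ ^ p x) * ϑ x) :=
          lintegral_mono_ae hae
      _ = ENNReal.ofReal C *
            ∫⁻ x, ENNReal.ofReal ((|f x| ^ p x + ‖fderiv ℝ f x‖ ^ p x) * ϑ x) :=
          lintegral_const_mul' _ _ hCt
      _ ≤ ENNReal.ofReal C * δ := mul_le_mul_right hvlt.le _
      _ = (ε : ℝ≥0∞) := ENNReal.mul_div_cancel hC0 hCt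
  calc sInf ((fun f => ∫⁻ x, ENNReal.ofReal ((|f x| ^ q x + ‖fderiv ℝ f x‖ ^ q x) * ϑ x)) ''
        {f : EuclideanSpace ℝ (Fin n) → ℝ |
          ContDiff ℝ 1 f ∧ ∃ U, IsOpen U ∧ A ⊆ U ∧ ∀ x ∈ U, 1 ≤ f x})
      ≤ _ := sInf_le hmem
    _ ≤ (ε : ℝ≥0∞) := hbound
    _ ≤ 0 + ε := by simp

end
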